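/- Let 𝔤 be a compact Lie algebra (the Lie algebra of a compact Lie group G), and let ρ₁ : 𝔤 → 𝔰𝔬(V₁) and ρ₂ : 𝔤 → 𝔰𝔬(V₂) be two finite-dimensional orthogonal representations that are disjoint (share no isomorphic irreducible subrepresentation). Then there exists an element ω' in the tensor algebra (universal enveloping algebra) of 𝔤 such that ρ₁(ω') = id_{V₁} and ρ₂(ω') = 0, where ρᵢ is extended multiplicatively to the tensor algebra. -/

import Mathlib

open scoped RealInnerProductSpace

lemma adjoint_smul_real {V W : Type*} [NormedAddCommGroup V] [InnerProductSpace ℝ V]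
    [FiniteDimensional ℝ V] [NormedAddCommGroup W] [InnerProductSpace ℝ W]
    [FiniteDimensional ℝ W] (c : ℝ) (X : V →ₗ[ℝ] W) :
    LinearMap.adjoint (c • X) = c • LinearMap.adjoint X := by
  ext w
  apply ext_inner_right ℝ
  intro v
  rw [LinearMap.adjoint_inner_left]
  simp [LinearMap.adjoint_inner_left, real_inner_smul_left, real_inner_smul_right]

lemma adjoint_add_real {V W : Type*} [NormedAddCommGroup V] [InnerProductSpace ℝ V]
    [FiniteDimensional ℝ V] [NormedAddCommGroup W] [InnerProductSpace ℝ W]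
    [FiniteDimensional ℝ W] (X Y : V →ₗ[ℝ] W) :
    LinearMap.adjoint (X + Y) = LinearMap.adjoint X + LinearMap.adjoint Y :=
  map_add _ _ _

lemma trace_adjoint_comp_self_eq' {V : Type*} [NormedAddCommGroup V]
    [InnerProductSpace ℝ V] [FiniteDimensional ℝ V] (X : Module.End ℝ V) :
    LinearMap.trace ℝ V (LinearMap.adjoint X * X) =
      ∑ i, ‖X ((stdOrthonormalBasis ℝ V) i)‖ ^ 2 := by
  classical
  set b := stdOrthonormalBasis ℝ V
  rw [LinearMap.trace_eq_matrix_trace ℝ b.toBasis, Matrix.trace]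
  congr 1
  ext i
  rw [Matrix.diag_apply, LinearMap.toMatrix_apply, b.coe_toBasis,
    b.coe_toBasis_repr_apply, b.repr_apply_apply]
  rw [Module.End.mul_apply, LinearMap.adjoint_inner_right]
  exact (real_inner_self_eq_norm_sq _)

lemma trace_adjoint_comp_self_nonneg' {V : Type*} [NormedAddCommGroup V]
    [InnerProductSpace ℝ V] [FiniteDimensional ℝ V] (X : Module.End ℝ V) :
    0 ≤ LinearMap.trace ℝ V (LinearMap.adjoint X * X) := by
  rw [trace_adjoint_comp_self_eq']
  positivity

lemma eq_zero_of_trace_adjoint_comp_self' {V : Type*} [NormedAddCommGroup V]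
    [InnerProductSpace ℝ V] [FiniteDimensional ℝ V] (X : Module.End ℝ V)
    (h : LinearMap.trace ℝ V (LinearMap.adjoint X * X) = 0) : X = 0 := by
  rw [trace_adjoint_comp_self_eq'] at h
  have h' : ∀ i, ‖X ((stdOrthonormalBasis ℝ V) i)‖ ^ 2 = 0 := by
    intro i
    exact Finset.sum_eq_zero_iff_of_nonneg (fun i _ => by positivity) |>.mp h i
      (Finset.mem_univ i)
  apply (stdOrthonormalBasis ℝ V).toBasis.ext (fun i => ?_)
  have h2 : ‖X ((stdOrthonormalBasis ℝ V) i)‖ = 0 := by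
    nlinarith [h' i, norm_nonneg (X ((stdOrthonormalBasis ℝ V) i))]
  simp [norm_eq_zero.mp h2, OrthonormalBasis.coe_toBasis]

set_option maxHeartbeats 2000000 in
/-- Let `𝔤` be a compact Lie algebra (i.e. carrying an invariant inner
product), and let `ρ₁`, `ρ₂` be finite-dimensional orthogonal representations which are
disjoint (no nonzero equivariant map between them, equivalently they share no isomorphic
irreducible subrepresentation).  Then there is an element `ω'` of the tensor algebra of `𝔤`
with `ρ₁(ω') = id` and `ρ₂(ω') = 0`, where `ρᵢ` is extended multiplicatively. -/
theorem disjoint_representations_separating_element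
    {L : Type*} [LieRing L] [LieAlgebra ℝ L] [NormedAddCommGroup L]
    [InnerProductSpace ℝ L] [FiniteDimensional ℝ L]
    (hinv : ∀ x y z : L, ⟪⁅x, y⁆, z⟫ + ⟪y, ⁅x, z⁆⟫ = 0)
    {V₁ V₂ : Type*}
    [NormedAddCommGroup V₁] [InnerProductSpace ℝ V₁] [FiniteDimensional ℝ V₁]
    [NormedAddCommGroup V₂] [InnerProductSpace ℝ V₂] [FiniteDimensional ℝ V₂]
    (ρ₁ : L →ₗ[ℝ] Module.End ℝ V₁) (ρ₂ : L →ₗ[ℝ] Module.End ℝ V₂)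
    (hρ₁lie : ∀ x y : L, ρ₁ ⁅x, y⁆ = ρ₁ x * ρ₁ y - ρ₁ y * ρ₁ x)
    (hρ₂lie : ∀ x y : L, ρ₂ ⁅x, y⁆ = ρ₂ x * ρ₂ y - ρ₂ y * ρ₂ x)
    (hρ₁skew : ∀ x : L, LinearMap.adjoint (ρ₁ x) = -(ρ₁ x))
    (hρ₂skew : ∀ x : L, LinearMap.adjoint (ρ₂ x) = -(ρ₂ x))
    (hdisj : ∀ φ : V₁ →ₗ[ℝ] V₂,
      (∀ (x : L) (v : V₁), φ (ρ₁ x v) = ρ₂ x (φ v)) → φ = 0) :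
    ∃ ω' : TensorAlgebra ℝ L,
      TensorAlgebra.lift ℝ ρ₁ ω' = 1 ∧ TensorAlgebra.lift ℝ ρ₂ ω' = 0 := by
  classical
  -- the combined representation into the product algebra
  let Φ : TensorAlgebra ℝ L →ₐ[ℝ] (Module.End ℝ V₁ × Module.End ℝ V₂) := TensorAlgebra.lift ℝ (LinearMap.prod ρ₁ ρ₂)
  set n : Submodule ℝ (Module.End ℝ V₁ × Module.End ℝ V₂) := Subalgebra.toSubmodule Φ.range with hn
  have hgmem : ∀ x : L, ((ρ₁ x, ρ₂ x) : (Module.End ℝ V₁ × Module.End ℝ V₂)) ∈ n := by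
    intro x
    refine ⟨TensorAlgebra.ι ℝ x, ?_⟩
    show Φ (TensorAlgebra.ι ℝ x) = _
    rw [show Φ = TensorAlgebra.lift ℝ (LinearMap.prod ρ₁ ρ₂) from rfl,
      TensorAlgebra.lift_ι_apply]
    rfl
  have honemem : (1 : (Module.End ℝ V₁ × Module.End ℝ V₂)) ∈ n := Subalgebra.one_mem _
  have hmulmem : ∀ x : L, ∀ d ∈ n, ((ρ₁ x, ρ₂ x) : (Module.End ℝ V₁ × Module.End ℝ V₂)) * d ∈ n := by
    intro x d hd
    exact Subalgebra.mul_mem _ (hgmem x) hd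
  -- the trace bilinear form
  let B₀ : (Module.End ℝ V₁ × Module.End ℝ V₂) →ₗ[ℝ] (Module.End ℝ V₁ × Module.End ℝ V₂) →ₗ[ℝ] ℝ := LinearMap.mk₂ ℝ
    (fun a y => LinearMap.trace ℝ V₁ (LinearMap.adjoint a.1 * y.1)
      + LinearMap.trace ℝ V₂ (LinearMap.adjoint a.2 * y.2))
    (by intro a a' y
        simp only [Prod.fst_add, Prod.snd_add, adjoint_add_real, add_mul, map_add]
        ring)
    (by intro c a y
        simp only [Prod.smul_fst, Prod.smul_snd, adjoint_smul_real, smul_mul_assoc,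
          map_smul, smul_eq_mul]
        ring)
    (by intro a y y'; simp [mul_add]; ring)
    (by intro c a y; simp [mul_smul_comm]; ring)
  have hB₀pos : ∀ d : (Module.End ℝ V₁ × Module.End ℝ V₂), B₀ d d = 0 → d = 0 := by
    intro d hd
    simp only [B₀, LinearMap.mk₂_apply] at hd
    have h1 := trace_adjoint_comp_self_nonneg' d.1
    have h2 := trace_adjoint_comp_self_nonneg' d.2
    have e1 : d.1 = 0 := eq_zero_of_trace_adjoint_comp_self' d.1 (by linarith)
    have e2 : d.2 = 0 := eq_zero_of_trace_adjoint_comp_self' d.2 (by linarith)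
    exact Prod.ext e1 e2
  -- adjoint identity for the bilinear form
  have hadj : ∀ (x : L) (a y : (Module.End ℝ V₁ × Module.End ℝ V₂)),
      B₀ a (((ρ₁ x, ρ₂ x) : (Module.End ℝ V₁ × Module.End ℝ V₂)) * y) = B₀ ((-((ρ₁ x, ρ₂ x) : (Module.End ℝ V₁ × Module.End ℝ V₂))) * a) y := by
    intro x a y
    simp only [B₀, LinearMap.mk₂_apply]
    have c1 : LinearMap.adjoint a.1 * (ρ₁ x * y.1)
        = LinearMap.adjoint ((-((ρ₁ x, ρ₂ x) : (Module.End ℝ V₁ × Module.End ℝ V₂)) * a).1) * y.1 := by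
      have : (-((ρ₁ x, ρ₂ x) : (Module.End ℝ V₁ × Module.End ℝ V₂)) * a).1 = LinearMap.adjoint (ρ₁ x) * a.1 := by
        simp [hρ₁skew, Prod.fst_mul, neg_mul]
      rw [this, ← mul_assoc]
      congr 1
      rw [Module.End.mul_eq_comp, Module.End.mul_eq_comp, LinearMap.adjoint_comp,
        LinearMap.adjoint_adjoint]
    have c2 : LinearMap.adjoint a.2 * (ρ₂ x * y.2)
        = LinearMap.adjoint ((-((ρ₁ x, ρ₂ x) : (Module.End ℝ V₁ × Module.End ℝ V₂)) * a).2) * y.2 := by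
      have : (-((ρ₁ x, ρ₂ x) : (Module.End ℝ V₁ × Module.End ℝ V₂)) * a).2 = LinearMap.adjoint (ρ₂ x) * a.2 := by
        simp [hρ₂skew, Prod.snd_mul, neg_mul]
      rw [this, ← mul_assoc]
      congr 1
      rw [Module.End.mul_eq_comp, Module.End.mul_eq_comp, LinearMap.adjoint_comp,
        LinearMap.adjoint_adjoint]
    rw [Prod.fst_mul, Prod.snd_mul, c1, c2]
  -- the "conditional expectation" / projection onto the image algebra
  let ψ : (Module.End ℝ V₁ × Module.End ℝ V₂) →ₗ[ℝ] Module.Dual ℝ n :=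
    { toFun := fun y => (B₀.flip y).comp n.subtype
      map_add' := by intro y y'; ext a; simp
      map_smul' := by intro c y; ext a; simp }
  have hψapp : ∀ (y : (Module.End ℝ V₁ × Module.End ℝ V₂)) (a : n), ψ y a = B₀ (a : (Module.End ℝ V₁ × Module.End ℝ V₂)) y := fun y a => rfl
  let ψA : n →ₗ[ℝ] Module.Dual ℝ n := ψ.comp n.subtype
  have hψAinj : Function.Injective ψA := by
    rw [← LinearMap.ker_eq_bot]
    apply (Submodule.eq_bot_iff _).mpr
    intro a ha
    rw [LinearMap.mem_ker] at ha
    have : B₀ (a : (Module.End ℝ V₁ × Module.End ℝ V₂)) (a : (Module.End ℝ V₁ × Module.End ℝ V₂)) = 0 := by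
      have := congrArg (fun f => f a) ha
      simpa [hψapp, ψA] using this
    have := hB₀pos _ this
    exact Subtype.ext this
  have hψAbij : Function.Bijective ψA :=
    ⟨hψAinj, (LinearMap.injective_iff_surjective_of_finrank_eq_finrank
      (Subspace.dual_finrank_eq).symm).mp hψAinj⟩
  let eA : n ≃ₗ[ℝ] Module.Dual ℝ n := LinearEquiv.ofBijective ψA hψAbij
  let T : (Module.End ℝ V₁ × Module.End ℝ V₂) →ₗ[ℝ] (Module.End ℝ V₁ × Module.End ℝ V₂) := n.subtype ∘ₗ (eA.symm : Module.Dual ℝ n →ₗ[ℝ] n) ∘ₗ ψ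
  have hTmem : ∀ d : (Module.End ℝ V₁ × Module.End ℝ V₂), T d ∈ n := fun d => (eA.symm (ψ d)).2
  have hTid : ∀ d : (Module.End ℝ V₁ × Module.End ℝ V₂), d ∈ n → T d = d := by
    intro d hd
    have h0 : ψ d = eA ⟨d, hd⟩ := rfl
    show n.subtype ((eA.symm : Module.Dual ℝ n →ₗ[ℝ] n) (ψ d)) = d
    rw [h0]
    have h2 : (eA.symm : Module.Dual ℝ n →ₗ[ℝ] n) (eA ⟨d, hd⟩) = ⟨d, hd⟩ :=
      eA.symm_apply_apply ⟨d, hd⟩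
    rw [h2]
    rfl
  have hψT : ∀ d : (Module.End ℝ V₁ × Module.End ℝ V₂), ψ (T d) = ψ d := by
    intro d
    have : ψ (T d) = ψA (eA.symm (ψ d)) := rfl
    rw [this]
    exact eA.apply_symm_apply (ψ d)
  have hinjn : ∀ a b : (Module.End ℝ V₁ × Module.End ℝ V₂), a ∈ n → b ∈ n → ψ a = ψ b → a = b := by
    intro a b ha hb hab
    have : ψA ⟨a, ha⟩ = ψA ⟨b, hb⟩ := hab
    exact congrArg Subtype.val (hψAinj this)
  -- equivariance of T under left multiplication by generators
  have hTequiv : ∀ (x : L) (d : (Module.End ℝ V₁ × Module.End ℝ V₂)),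
      T (((ρ₁ x, ρ₂ x) : (Module.End ℝ V₁ × Module.End ℝ V₂)) * d) = ((ρ₁ x, ρ₂ x) : (Module.End ℝ V₁ × Module.End ℝ V₂)) * T d := by
    intro x d
    apply hinjn _ _ (hTmem _) (hmulmem x _ (hTmem d))
    rw [hψT]
    ext a
    rw [hψapp, hψapp, hadj, hadj]
    have hmem : (-((ρ₁ x, ρ₂ x) : (Module.End ℝ V₁ × Module.End ℝ V₂))) * (a : (Module.End ℝ V₁ × Module.End ℝ V₂)) ∈ n :=
      Subalgebra.mul_mem _ (Subalgebra.neg_mem _ (hgmem x)) a.2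
    have := congrArg (fun f => f (⟨_, hmem⟩ : n)) (hψT d)
    simpa [hψapp] using this.symm
  -- disjointness in the other direction, via adjoints
  have h21 : ∀ φ : V₂ →ₗ[ℝ] V₁,
      (∀ (x : L) (w : V₂), φ (ρ₂ x w) = ρ₁ x (φ w)) → φ = 0 := by
    intro φ hφ
    have hadjφ : LinearMap.adjoint φ = 0 := by
      apply hdisj
      intro x v
      apply ext_inner_right ℝ
      intro w
      rw [LinearMap.adjoint_inner_left]
      have e1 : ⟪ρ₁ x v, φ w⟫ = -⟪v, ρ₁ x (φ w)⟫ := by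
        rw [← LinearMap.adjoint_inner_left (ρ₁ x), hρ₁skew]
        simp
      have e2 : ⟪(ρ₂ x) (LinearMap.adjoint φ v), w⟫ = -⟪LinearMap.adjoint φ v, ρ₂ x w⟫ := by
        rw [← LinearMap.adjoint_inner_left (ρ₂ x), hρ₂skew]
        simp
      rw [e1, e2, ← hφ, LinearMap.adjoint_inner_left]
    have := congrArg LinearMap.adjoint hadjφ
    rwa [LinearMap.adjoint_adjoint, map_zero] at this
  -- main combinatorial step: T commutes with left multiplication by q = (1, 0)
  set q : (Module.End ℝ V₁ × Module.End ℝ V₂) := ((1 : Module.End ℝ V₁), (0 : Module.End ℝ V₂)) with hq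
  have hPe : ∀ (ξ₁ : Module.Dual ℝ V₁) (ξ₂ : Module.Dual ℝ V₂) (h₁ : V₁) (h₂ : V₂),
      T (q * (ξ₁.smulRight h₁, ξ₂.smulRight h₂)) = q * T (ξ₁.smulRight h₁, ξ₂.smulRight h₂) := by
    intro ξ₁ ξ₂ h₁ h₂
    -- define the "column" operator S for each pair of evaluation vectors
    have key : ∀ (u₁ : V₁) (u₂ : V₂),
        ((T (q * (ξ₁.smulRight h₁, ξ₂.smulRight h₂))).1 u₁ =
          (T (ξ₁.smulRight h₁, ξ₂.smulRight h₂)).1 u₁) ∧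
        ((T (q * (ξ₁.smulRight h₁, ξ₂.smulRight h₂))).2 u₂ = 0) := by
      intro u₁ u₂
      let S : (V₁ × V₂) →ₗ[ℝ] (V₁ × V₂) :=
        { toFun := fun h => ((T (ξ₁.smulRight h.1, ξ₂.smulRight h.2)).1 u₁,
            (T (ξ₁.smulRight h.1, ξ₂.smulRight h.2)).2 u₂)
          map_add' := by
            intro h h'
            have e1 : ((ξ₁.smulRight (h.1 + h'.1), ξ₂.smulRight (h.2 + h'.2))
                  : (Module.End ℝ V₁ × Module.End ℝ V₂))
                = ((ξ₁.smulRight h.1, ξ₂.smulRight h.2) : (Module.End ℝ V₁ × Module.End ℝ V₂))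
                  + (ξ₁.smulRight h'.1, ξ₂.smulRight h'.2) := by
              apply Prod.ext <;>
                (ext v
                 simp only [LinearMap.smulRight_apply, Prod.fst_add, Prod.snd_add,
                   LinearMap.add_apply, smul_add])
            rw [Prod.fst_add, Prod.snd_add, e1, map_add]
            rfl
          map_smul' := by
            intro c h
            have e1 : ((ξ₁.smulRight (c • h.1), ξ₂.smulRight (c • h.2))
                  : (Module.End ℝ V₁ × Module.End ℝ V₂))
                = c • ((ξ₁.smulRight h.1, ξ₂.smulRight h.2)
                  : (Module.End ℝ V₁ × Module.End ℝ V₂)) := by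
              apply Prod.ext <;>
                (ext v
                 simp only [LinearMap.smulRight_apply, Prod.smul_fst, Prod.smul_snd,
                   LinearMap.smul_apply]
                 rw [smul_comm])
            rw [Prod.smul_fst, Prod.smul_snd, e1, map_smul]
            rfl }
      have hSequiv : ∀ (x : L) (h : V₁ × V₂),
          S (ρ₁ x h.1, ρ₂ x h.2) = (ρ₁ x (S h).1, ρ₂ x (S h).2) := by
        intro x h
        have e1 : ((ξ₁.smulRight (ρ₁ x h.1), ξ₂.smulRight (ρ₂ x h.2)) : (Module.End ℝ V₁ × Module.End ℝ V₂))
            = ((ρ₁ x, ρ₂ x) : (Module.End ℝ V₁ × Module.End ℝ V₂)) * (ξ₁.smulRight h.1, ξ₂.smulRight h.2) := by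
          apply Prod.ext <;> (ext v; simp)
        show ((T _).1 u₁, (T _).2 u₂) = _
        rw [e1, hTequiv]
        rfl
      -- the off-diagonal blocks of S vanish
      have hS21 : ∀ v : V₁, (S (v, 0)).2 = 0 := by
        have : ((LinearMap.snd ℝ V₁ V₂) ∘ₗ S ∘ₗ (LinearMap.inl ℝ V₁ V₂)) = 0 := by
          apply hdisj
          intro x v
          have := hSequiv x (v, 0)
          simp only [LinearMap.comp_apply, LinearMap.inl_apply, LinearMap.snd_apply]
          have e0 : ((ρ₁ x v, ρ₂ x (0 : V₂)) : V₁ × V₂) = (ρ₁ x v, 0) := by simp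
          rw [← e0, this]
        intro v
        have := congrArg (fun f => f v) this
        simpa using this
      have hS12 : ∀ w : V₂, (S (0, w)).1 = 0 := by
        have : ((LinearMap.fst ℝ V₁ V₂) ∘ₗ S ∘ₗ (LinearMap.inr ℝ V₁ V₂)) = 0 := by
          apply h21
          intro x w
          have := hSequiv x (0, w)
          simp only [LinearMap.comp_apply, LinearMap.inr_apply, LinearMap.fst_apply]
          have e0 : ((ρ₁ x (0 : V₁), ρ₂ x w) : V₁ × V₂) = (0, ρ₂ x w) := by simp
          rw [← e0, this]
        intro w
        have := congrArg (fun f => f w) this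
        simpa using this
      -- conclude
      have hqmul : q * ((ξ₁.smulRight h₁, ξ₂.smulRight h₂) : (Module.End ℝ V₁ × Module.End ℝ V₂))
          = (ξ₁.smulRight h₁, ξ₂.smulRight (0 : V₂)) := by
        apply Prod.ext <;> (ext v; simp [hq])
      constructor
      · rw [hqmul]
        calc (T (ξ₁.smulRight h₁, ξ₂.smulRight (0 : V₂))).1 u₁
            = (S (h₁, 0)).1 := rfl
          _ = (S (h₁, 0)).1 + (S (0, h₂)).1 := by rw [hS12 h₂, add_zero]
          _ = (S ((h₁, 0) + (0, h₂))).1 := by rw [map_add, Prod.fst_add]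
          _ = (S (h₁, h₂)).1 := by rw [Prod.mk_add_mk, add_zero, zero_add]
          _ = (T (ξ₁.smulRight h₁, ξ₂.smulRight h₂)).1 u₁ := rfl
      · rw [hqmul]
        exact hS21 h₁
    have h1 : (T (q * (ξ₁.smulRight h₁, ξ₂.smulRight h₂))).1
        = (T (ξ₁.smulRight h₁, ξ₂.smulRight h₂)).1 := by
      ext u₁; exact (key u₁ 0).1
    have h2 : (T (q * (ξ₁.smulRight h₁, ξ₂.smulRight h₂))).2 = 0 := by
      ext u₂; exact (key 0 u₂).2
    have hqT : q * T (ξ₁.smulRight h₁, ξ₂.smulRight h₂)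
        = ((T (ξ₁.smulRight h₁, ξ₂.smulRight h₂)).1, 0) := by
      apply Prod.ext <;> simp [hq]
    rw [hqT]
    exact Prod.ext h1 h2
  -- extend to all of the product algebra by linearity, via rank-one operators
  have hsr0₂ : ∀ ξ : Module.Dual ℝ V₂, ξ.smulRight (0 : V₂) = 0 := by
    intro ξ; ext v; simp
  have hsr0₁ : ∀ ξ : Module.Dual ℝ V₁, ξ.smulRight (0 : V₁) = 0 := by
    intro ξ; ext v; simp
  have hP1 : ∀ X : Module.End ℝ V₁,
      T (q * ((X, 0) : (Module.End ℝ V₁ × Module.End ℝ V₂)))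
        = q * T ((X, 0) : (Module.End ℝ V₁ × Module.End ℝ V₂)) := by
    intro X
    set b := Module.finBasis ℝ V₁ with hb
    have hXsum : X = ∑ i, (b.coord i).smulRight (X (b i)) := by
      ext v
      conv_lhs => rw [← b.sum_repr v]
      rw [map_sum, LinearMap.sum_apply]
      simp [LinearMap.smulRight_apply, Module.Basis.coord_apply, map_smul]
    have hpair : ((X, 0) : (Module.End ℝ V₁ × Module.End ℝ V₂))
        = ∑ i, (((b.coord i).smulRight (X (b i)), (0 : Module.End ℝ V₂))
          : (Module.End ℝ V₁ × Module.End ℝ V₂)) := by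
      apply Prod.ext
      · rw [Prod.fst_sum]
        simpa using hXsum
      · rw [Prod.snd_sum]
        simp
    have hPr : ∀ (ξ : Module.Dual ℝ V₁) (w : V₁),
        T (q * ((ξ.smulRight w, 0) : (Module.End ℝ V₁ × Module.End ℝ V₂)))
          = q * T ((ξ.smulRight w, 0) : (Module.End ℝ V₁ × Module.End ℝ V₂)) := by
      intro ξ w
      have := hPe ξ 0 w 0
      rwa [hsr0₂ 0] at this
    rw [hpair, Finset.mul_sum, map_sum, map_sum, Finset.mul_sum]
    exact Finset.sum_congr rfl (fun i _ => hPr _ _)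
  have hP2 : ∀ Y : Module.End ℝ V₂,
      T (q * ((0, Y) : (Module.End ℝ V₁ × Module.End ℝ V₂)))
        = q * T ((0, Y) : (Module.End ℝ V₁ × Module.End ℝ V₂)) := by
    intro Y
    set b := Module.finBasis ℝ V₂ with hb
    have hYsum : Y = ∑ i, (b.coord i).smulRight (Y (b i)) := by
      ext v
      conv_lhs => rw [← b.sum_repr v]
      rw [map_sum, LinearMap.sum_apply]
      simp [LinearMap.smulRight_apply, Module.Basis.coord_apply, map_smul]
    have hpair : ((0, Y) : (Module.End ℝ V₁ × Module.End ℝ V₂))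
        = ∑ i, (((0 : Module.End ℝ V₁), (b.coord i).smulRight (Y (b i)))
          : (Module.End ℝ V₁ × Module.End ℝ V₂)) := by
      apply Prod.ext
      · rw [Prod.fst_sum]
        simp
      · rw [Prod.snd_sum]
        simpa using hYsum
    have hPr : ∀ (ξ : Module.Dual ℝ V₂) (w : V₂),
        T (q * ((0, ξ.smulRight w) : (Module.End ℝ V₁ × Module.End ℝ V₂)))
          = q * T ((0, ξ.smulRight w) : (Module.End ℝ V₁ × Module.End ℝ V₂)) := by
      intro ξ w
      have := hPe 0 ξ 0 w
      rwa [hsr0₁ 0] at this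
    rw [hpair, Finset.mul_sum, map_sum, map_sum, Finset.mul_sum]
    exact Finset.sum_congr rfl (fun i _ => hPr _ _)
  have hP : ∀ d : (Module.End ℝ V₁ × Module.End ℝ V₂), T (q * d) = q * T d := by
    intro d
    have hd : d = ((d.1, 0) : (Module.End ℝ V₁ × Module.End ℝ V₂)) + (0, d.2) := by
      apply Prod.ext <;> simp
    rw [hd, mul_add, map_add, map_add, mul_add, hP1, hP2]
  -- conclude: q is in the image algebra
  have hTq : T q = q := by
    have h1 : T 1 = 1 := hTid 1 honemem
    have := hP 1
    rwa [mul_one, h1, mul_one] at this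
  have hqmem : q ∈ n := by
    rw [← hTq]
    exact hTmem q
  obtain ⟨ω', hω'⟩ := hqmem
  refine ⟨ω', ?_, ?_⟩
  · have h1 : (AlgHom.fst ℝ (Module.End ℝ V₁) (Module.End ℝ V₂)).comp Φ
        = TensorAlgebra.lift ℝ ρ₁ := by
      refine TensorAlgebra.hom_ext (LinearMap.ext fun x => ?_)
      show (Φ (TensorAlgebra.ι ℝ x)).1 = (TensorAlgebra.lift ℝ ρ₁) (TensorAlgebra.ι ℝ x)
      rw [show Φ = TensorAlgebra.lift ℝ (LinearMap.prod ρ₁ ρ₂) from rfl,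
        TensorAlgebra.lift_ι_apply, TensorAlgebra.lift_ι_apply]
      rfl
    calc TensorAlgebra.lift ℝ ρ₁ ω'
        = (AlgHom.fst ℝ (Module.End ℝ V₁) (Module.End ℝ V₂)) (Φ ω') := by rw [← h1]; rfl
      _ = (AlgHom.fst ℝ (Module.End ℝ V₁) (Module.End ℝ V₂)) q :=
          congrArg (AlgHom.fst ℝ (Module.End ℝ V₁) (Module.End ℝ V₂)) hω'
      _ = 1 := rfl
  · have h2 : (AlgHom.snd ℝ (Module.End ℝ V₁) (Module.End ℝ V₂)).comp Φ
        = TensorAlgebra.lift ℝ ρ₂ := by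
      refine TensorAlgebra.hom_ext (LinearMap.ext fun x => ?_)
      show (Φ (TensorAlgebra.ι ℝ x)).2 = (TensorAlgebra.lift ℝ ρ₂) (TensorAlgebra.ι ℝ x)
      rw [show Φ = TensorAlgebra.lift ℝ (LinearMap.prod ρ₁ ρ₂) from rfl,
        TensorAlgebra.lift_ι_apply, TensorAlgebra.lift_ι_apply]
      rfl
    calc TensorAlgebra.lift ℝ ρ₂ ω'
        = (AlgHom.snd ℝ (Module.End ℝ V₁) (Module.End ℝ V₂)) (Φ ω') := by rw [← h2]; rfl
      _ = (AlgHom.snd ℝ (Module.End ℝ V₁) (Module.End ℝ V₂)) q :=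
          congrArg (AlgHom.snd ℝ (Module.End ℝ V₁) (Module.End ℝ V₂)) hω'
      _ = 0 := rfl
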